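/- (Theorem 1, case p ≥ 2, unit weights.) With the 0/1 adjacency matrix A built from a fixed ranking r_x ∈ R, let L be the strictly lower-triangular part of A and z = (1,…,1)^T ∈ ℝ^n. Then for every integer p ≥ 2, the number of common subsequences of length p satisfies κ_p(R) = z^T L^{p−1} z. -/

import Mathlib

open List Matrix

/-- The set of nonempty common subsequences of a family of rankings,
where a ranking is a list and "subsequence" is `List.Sublist`. -/
def commonSubseq {α : Type*} (R : Set (List α)) : Set (List α) :=
  {y | y ≠ [] ∧ ∀ r ∈ R, y.Sublist r}

/-- `κ(R)`: the number of nonempty common subsequences of the family `R`. -/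
noncomputable def kappa {α : Type*} (R : Set (List α)) : ℕ :=
  (commonSubseq R).ncard

/-- `κ_p(R)`: the number of nonempty common subsequences of `R` of length `p`. -/
noncomputable def kappaP {α : Type*} (p : ℕ) (R : Set (List α)) : ℕ :=
  {y ∈ commonSubseq R | y.length = p}.ncard

section Aux

variable {α : Type*} [DecidableEq α]

/-- Core characterization: a list is a sublist of a duplicate-free list `r` iff all its
elements belong to `r` and their indices in `r` are pairwise increasing. -/
theorem sublist_iff_indexOf_aux {r y : List α} (hr : r.Nodup) :
    y.Sublist r ↔ (∀ x ∈ y, x ∈ r) ∧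
      y.Pairwise (fun x z => r.idxOf x < r.idxOf z) := by
  constructor
  · intro h
    refine ⟨fun x hx => h.subset hx, ?_⟩
    rw [List.sublist_iff_exists_fin_orderEmbedding_get_eq] at h
    obtain ⟨f, hf⟩ := h
    rw [List.pairwise_iff_get]
    intro i j hij
    rw [hf i, hf j]
    have h1 : r.idxOf (r.get (f i)) = ((f i : Fin r.length) : ℕ) := by
      simpa using List.Nodup.idxOf_getElem hr (f i) (f i).isLt
    have h2 : r.idxOf (r.get (f j)) = ((f j : Fin r.length) : ℕ) := by
      simpa using List.Nodup.idxOf_getElem hr (f j) (f j).isLt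
    rw [h1, h2]
    exact_mod_cast f.strictMono hij
  · rintro ⟨hmem, hpw⟩
    rw [List.sublist_iff_exists_fin_orderEmbedding_get_eq]
    have hlt : ∀ ix : Fin y.length, r.idxOf (y.get ix) < r.length :=
      fun ix => List.idxOf_lt_length_iff.2 (hmem _ (y.get_mem ix))
    refine ⟨OrderEmbedding.ofStrictMono (fun ix => ⟨r.idxOf (y.get ix), hlt ix⟩) ?_, ?_⟩
    · intro i j hij
      exact List.pairwise_iff_get.1 hpw i j hij
    · intro ix
      exact (List.idxOf_get (hlt ix)).symm

/-- The step relation between positions of the reference ranking `rx`. -/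
def rstep (R : Finset (List α)) (rx : List α) (a b : Fin rx.length) : Prop :=
  a < b ∧ (∀ r ∈ R, rx.get b ∈ r) ∧ (∀ r ∈ R, rx.get a ∈ r) ∧
    ∀ r ∈ R, r.idxOf (rx.get a) < r.idxOf (rx.get b)

instance (R : Finset (List α)) (rx : List α) : DecidableRel (rstep R rx) := fun a b => by
  unfold rstep; infer_instance

theorem rstep_trans (R : Finset (List α)) (rx : List α) : Transitive (rstep R rx) := by
  rintro a b c ⟨h1, h2, h3, h4⟩ ⟨g1, g2, g3, g4⟩
  exact ⟨h1.trans g1, g2, h3, fun r hr => (h4 r hr).trans (g4 r hr)⟩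

/-- The 0/1 natural-number adjacency matrix of the step relation. -/
def Nmat (R : Finset (List α)) (rx : List α) :
    Matrix (Fin rx.length) (Fin rx.length) ℕ :=
  fun a b => if rstep R rx a b then 1 else 0

/-- `Gset R rx m a` : the common subsequences of length `m+1` starting at position `a`. -/
def Gset (R : Finset (List α)) (rx : List α) : ℕ → Fin rx.length → Finset (List α)
  | 0, a => {[rx.get a]}
  | m + 1, a =>
      (Finset.univ.filter (fun b => rstep R rx a b)).biUnion
        (fun b => (Gset R rx m b).image (List.cons (rx.get a)))

theorem mem_Gset (R : Finset (List α)) (rx : List α) :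
    ∀ (m : ℕ) (a : Fin rx.length) (y : List α),
      y ∈ Gset R rx m a ↔
        ∃ l : List (Fin rx.length), y = (a :: l).map rx.get ∧ l.length = m ∧
          List.Chain (rstep R rx) a l
  | 0, a, y => by
    simp only [Gset, Finset.mem_singleton]
    constructor
    · rintro rfl; exact ⟨[], by simp, rfl, List.Chain.nil⟩
    · rintro ⟨l, rfl, hl, -⟩
      simp [List.length_eq_zero_iff.mp hl]
  | m + 1, a, y => by
    simp only [Gset, Finset.mem_biUnion, Finset.mem_filter, Finset.mem_univ, true_and,
      Finset.mem_image]
    constructor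
    · rintro ⟨b, hb, t, ht, rfl⟩
      obtain ⟨l, rfl, hl, hc⟩ := (mem_Gset R rx m b t).1 ht
      exact ⟨b :: l, by simp, by simp [hl], List.Chain.cons hb hc⟩
    · rintro ⟨l, rfl, hl, hc⟩
      cases l with
      | nil => simp at hl
      | cons b l' =>
        cases hc with
        | cons_cons hab hc =>
          exact ⟨b, hab, (b :: l').map rx.get,
            (mem_Gset R rx m b _).2 ⟨l', rfl, by simpa using hl, hc⟩, by simp⟩

theorem head_Gset (R : Finset (List α)) (rx : List α) (m : ℕ) (a : Fin rx.length)
    {y : List α} (hy : y ∈ Gset R rx m a) : ∃ t, y = rx.get a :: t := by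
  obtain ⟨l, rfl, -, -⟩ := (mem_Gset R rx m a y).1 hy
  exact ⟨l.map rx.get, by simp⟩

theorem card_Gset (R : Finset (List α)) (rx : List α) (hrx : rx.Nodup) :
    ∀ (m : ℕ) (a : Fin rx.length),
      (Gset R rx m a).card = ((Nmat R rx ^ m) *ᵥ fun _ => 1) a
  | 0, a => by
    simp [Gset, Matrix.one_mulVec]
  | m + 1, a => by
    have hinj : Function.Injective rx.get := List.nodup_iff_injective_get.mp hrx
    have hdisj : ∀ b ∈ Finset.univ.filter (fun b => rstep R rx a b),
        ∀ b' ∈ Finset.univ.filter (fun b => rstep R rx a b), b ≠ b' →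
          Disjoint ((Gset R rx m b).image (List.cons (rx.get a)))
            ((Gset R rx m b').image (List.cons (rx.get a))) := by
      intro b _ b' _ hbb'
      rw [Finset.disjoint_left]
      rintro y hy hy'
      obtain ⟨t, ht, rfl⟩ := Finset.mem_image.mp hy
      obtain ⟨t', ht', heq⟩ := Finset.mem_image.mp hy'
      have : t' = t := by simpa using heq
      subst this
      obtain ⟨u, hu⟩ := head_Gset R rx m b ht
      obtain ⟨u', hu'⟩ := head_Gset R rx m b' ht'
      rw [hu] at hu'
      have hbb : rx.get b = rx.get b' := by simpa using congrArg List.head? hu'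
      exact hbb' (hinj hbb)
    have : Gset R rx (m + 1) a =
        (Finset.univ.filter (fun b => rstep R rx a b)).biUnion
          (fun b => (Gset R rx m b).image (List.cons (rx.get a))) := rfl
    rw [this, Finset.card_biUnion hdisj]
    have hcard : ∀ b, ((Gset R rx m b).image (List.cons (rx.get a))).card =
        ((Nmat R rx ^ m) *ᵥ fun _ => 1) b := by
      intro b
      rw [Finset.card_image_of_injective _ (List.cons_injective), card_Gset R rx hrx m b]
    rw [Finset.sum_congr rfl fun b _ => hcard b]
    rw [pow_succ', ← Matrix.mulVec_mulVec]
    simp only [Matrix.mulVec, dotProduct, Nmat, ite_mul, one_mul, zero_mul]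
    rw [Finset.sum_filter]
    rfl

theorem commonSubseq_eq_biUnion (R : Finset (List α)) (rx : List α)
    (hnd : ∀ r ∈ R, r.Nodup) (hrx : rx ∈ R) (m : ℕ) (hm : 1 ≤ m) :
    {y | y ∈ commonSubseq (R : Set (List α)) ∧ y.length = m + 1} =
      ↑(Finset.univ.biUnion (Gset R rx m)) := by
  haveI : IsTrans (Fin rx.length) (rstep R rx) := ⟨fun a b c hab hbc => rstep_trans R rx hab hbc⟩
  ext y
  simp only [Set.mem_setOf_eq, Finset.coe_biUnion, Finset.coe_univ, Set.mem_iUnion,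
    Set.mem_univ, Finset.mem_coe, true_and, exists_true_left]
  constructor
  · rintro ⟨⟨hne, hsub⟩, hlen⟩
    -- `y` is a sublist of `rx`, so it is given by an increasing list of positions
    obtain ⟨f, hf⟩ := List.sublist_iff_exists_fin_orderEmbedding_get_eq.1 (hsub rx hrx)
    obtain ⟨l, hl⟩ : ∃ l : List (Fin rx.length), l = (List.finRange y.length).map f :=
      ⟨_, rfl⟩
    have hyl : y = l.map rx.get := by
      rw [hl, List.map_map]
      conv_lhs => rw [← List.map_get_finRange y]
      exact List.map_congr_left fun ix _ => hf ix
    have hllen : l.length = y.length := by simp [hl]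
    have hlpw : l.Pairwise (· < ·) := by
      rw [hl]
      exact (List.pairwise_lt_finRange y.length).map f fun _ _ h => f.strictMono h
    have hmemy : ∀ u ∈ l, ∀ r ∈ R, rx.get u ∈ r := by
      intro u hu r hr
      exact (hsub r hr).subset (hyl ▸ List.mem_map_of_mem (f := rx.get) hu)
    have hpwr : ∀ r ∈ R, l.Pairwise
        (fun u v => r.idxOf (rx.get u) < r.idxOf (rx.get v)) := by
      intro r hr
      have := ((sublist_iff_indexOf_aux (hnd r hr)).1 (hsub r hr)).2
      rw [hyl, List.pairwise_map] at this
      exact this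
    have hlrstep : l.Pairwise (rstep R rx) := by
      rw [List.pairwise_iff_get] at hlpw ⊢
      intro i j hij
      refine ⟨hlpw i j hij, fun r hr => hmemy _ (l.get_mem j) r hr,
        fun r hr => hmemy _ (l.get_mem i) r hr, fun r hr => ?_⟩
      exact List.pairwise_iff_get.1 (hpwr r hr) i j hij
    have hllen' : l.length = m + 1 := by rw [hllen, hlen]
    have hlne : l ≠ [] := by
      intro h
      rw [h] at hllen'
      simp at hllen'
    obtain ⟨a, l', rfl⟩ := List.exists_cons_of_ne_nil hlne
    refine ⟨a, (mem_Gset R rx m a y).2 ⟨l', hyl, ?_, ?_⟩⟩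
    · simpa using hllen'
    · exact List.isChain_iff_pairwise.2 hlrstep
  · rintro ⟨a, hy⟩
    obtain ⟨l, rfl, hllen, hchain⟩ := (mem_Gset R rx m a _).1 hy
    have hpw : (a :: l).Pairwise (rstep R rx) := List.isChain_iff_pairwise.1 hchain
    have hlne : l ≠ [] := by
      intro h
      rw [h] at hllen
      simp at hllen
      omega
    have hmem : ∀ u ∈ a :: l, ∀ r ∈ R, rx.get u ∈ r := by
      intro u hu r hr
      rcases List.mem_cons.1 hu with rfl | hu'
      · obtain ⟨b, hb⟩ := List.exists_mem_of_ne_nil l hlne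
        exact ((List.pairwise_cons.1 hpw).1 b hb).2.2.1 r hr
      · obtain ⟨w, hw, hwu⟩ : ∃ w, w ∈ a :: l ∧ rstep R rx w u := by
          exact ⟨a, List.mem_cons_self, (List.pairwise_cons.1 hpw).1 u hu'⟩
        exact hwu.2.1 r hr
    refine ⟨⟨by simp, fun r hr => ?_⟩, by simpa using hllen⟩
    rw [sublist_iff_indexOf_aux (hnd r hr)]
    constructor
    · intro x hx
      obtain ⟨u, hu, rfl⟩ := List.mem_map.1 hx
      exact hmem u hu r hr
    · rw [List.pairwise_map]
      exact hpw.imp fun h => h.2.2.2 r hr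

end Aux

/-- Theorem 1, case `p ≥ 2`, unit weights: with `L` the strictly
lower-triangular part of the 0/1 adjacency matrix built from a fixed ranking
`rx ∈ R`, and `z` the all-ones vector, `κ_p(R) = zᵀ L^(p-1) z`. -/
theorem kappaP_eq_quadratic_form {α : Type*} [DecidableEq α]
    (R : Finset (List α)) (hR : R.Nonempty) (hnd : ∀ r ∈ R, r.Nodup)
    (rx : List α) (hrx : rx ∈ R)
    (L : Matrix (Fin rx.length) (Fin rx.length) ℝ)
    (hlow : ∀ i j : Fin rx.length, j < i →
      L i j = if (∀ r ∈ R, rx.get i ∈ r) ∧ (∀ r ∈ R, rx.get j ∈ r) ∧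
          (∀ r ∈ R, r.idxOf (rx.get j) < r.idxOf (rx.get i))
        then 1 else 0)
    (hrest : ∀ i j : Fin rx.length, ¬ j < i → L i j = 0)
    (p : ℕ) (hp : 2 ≤ p) :
    (kappaP p (R : Set (List α)) : ℝ) =
      dotProduct (fun _ => 1) ((L ^ (p - 1)).mulVec fun _ => 1) := by
  have hrxnd : rx.Nodup := hnd rx hrx
  set m := p - 1 with hm
  have hm1 : 1 ≤ m := by omega
  have hpm : p = m + 1 := by omega
  -- identify L with the transpose of the cast of Nmat
  have hL : L = ((Nmat R rx).map (Nat.cast : ℕ → ℝ))ᵀ := by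
    ext i j
    simp only [Matrix.transpose_apply, Matrix.map_apply, Nmat]
    by_cases hij : j < i
    · rw [hlow i j hij]
      by_cases hP : (∀ r ∈ R, rx.get i ∈ r) ∧ (∀ r ∈ R, rx.get j ∈ r) ∧
          (∀ r ∈ R, r.idxOf (rx.get j) < r.idxOf (rx.get i))
      · rw [if_pos hP, if_pos ⟨hij, hP.1, hP.2.1, hP.2.2⟩]
        simp
      · rw [if_neg hP, if_neg]
        · simp
        · rintro ⟨-, h1, h2, h3⟩
          exact hP ⟨h1, h2, h3⟩
    · rw [hrest i j hij, if_neg]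
      · simp
      · rintro ⟨h, -⟩
        exact hij h
  -- compute the left-hand side
  have hset : {y ∈ commonSubseq (R : Set (List α)) | y.length = p} =
      ↑(Finset.univ.biUnion (Gset R rx m)) := by
    rw [hpm]
    exact commonSubseq_eq_biUnion R rx hnd hrx m hm1
  have hinj : Function.Injective rx.get := List.nodup_iff_injective_get.mp hrxnd
  have hdisj : ∀ a ∈ (Finset.univ : Finset (Fin rx.length)),
      ∀ a' ∈ (Finset.univ : Finset (Fin rx.length)), a ≠ a' →
        Disjoint (Gset R rx m a) (Gset R rx m a') := by
    intro a _ a' _ haa'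
    rw [Finset.disjoint_left]
    intro y hy hy'
    obtain ⟨t, ht⟩ := head_Gset R rx m a hy
    obtain ⟨t', ht'⟩ := head_Gset R rx m a' hy'
    rw [ht] at ht'
    have haa : rx.get a = rx.get a' := by simpa using congrArg List.head? ht'
    exact haa' (hinj haa)
  have hcount : kappaP p (R : Set (List α)) =
      ∑ a : Fin rx.length, ((Nmat R rx ^ m) *ᵥ fun _ => 1) a := by
    rw [kappaP, hset, Set.ncard_coe_finset, Finset.card_biUnion hdisj]
    exact Finset.sum_congr rfl fun a _ => card_Gset R rx hrxnd m a
  -- compute the right-hand side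
  have hLpow : L ^ m = ((Nmat R rx ^ m).map (Nat.cast : ℕ → ℝ))ᵀ := by
    rw [hL, ← Matrix.transpose_pow]
    congr 1
    have : (Nmat R rx).map (Nat.cast : ℕ → ℝ) =
        (Nat.castRingHom ℝ).mapMatrix (Nmat R rx) := rfl
    rw [this, ← map_pow]
    rfl
  rw [hLpow, hcount]
  push_cast
  simp only [dotProduct, Matrix.mulVec, Matrix.transpose_apply, Matrix.map_apply, one_mul,
    mul_one]
  simp only [Nat.cast_sum]
  exact Finset.sum_comm
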